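/- Let U : ℝ^d → ℝ be measurable and let A ⊆ B ⊆ ℝ^d be Lebesgue-measurable sets with B of finite Lebesgue measure. Suppose there exist m ∈ ℝ and δ₀ > 0 such that (i) U(x) ≥ m for all x ∈ B, (ii) U(x) ≥ m + δ₀ for all x ∈ B ∖ A, and (iii) for every δ > 0 the set {x ∈ A : U(x) < m + δ} has positive Lebesgue measure. Then lim_{ε → 0⁺} (∫_A e^{−U(x)/ε} dx) / (∫_B e^{−U(x)/ε} dx) = 1; that is, the Gibbs measure with density proportional to e^{−U(x)/ε} on B asymptotically concentrates all of its mass on A as the temperature ε tends to 0. -/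

import Mathlib

open MeasureTheory Filter Topology

/-- Laplace-type concentration of the Gibbs measure: if `U ≥ m` on `B`,
`U ≥ m + δ₀` on `B ∖ A`, and `A` contains points with energy arbitrarily close
to `m` (in the sense of positive Lebesgue measure of `{x ∈ A : U x < m + δ}`
for every `δ > 0`), then `∫_A e^{−U/ε} / ∫_B e^{−U/ε} → 1` as `ε → 0⁺`. -/
theorem gibbs_concentration (d : ℕ) (U : (Fin d → ℝ) → ℝ) (hU : Measurable U)
    (A B : Set (Fin d → ℝ))
    (hA : MeasurableSet A) (hB : MeasurableSet B) (hAB : A ⊆ B)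
    (hBfin : volume B < ⊤)
    (m δ₀ : ℝ) (hδ₀ : 0 < δ₀)
    (hlow : ∀ x ∈ B, m ≤ U x)
    (hgap : ∀ x ∈ B \ A, m + δ₀ ≤ U x)
    (hnear : ∀ δ : ℝ, 0 < δ → 0 < volume {x ∈ A | U x < m + δ}) :
    Tendsto (fun ε : ℝ =>
        (∫ x in A, Real.exp (-(U x) / ε)) / (∫ x in B, Real.exp (-(U x) / ε)))
      (𝓝[>] 0) (𝓝 1) := by
  set δ : ℝ := δ₀ / 2 with hδdef
  have hδ : 0 < δ := by positivity
  set S : Set (Fin d → ℝ) := {x ∈ A | U x < m + δ} with hSdef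
  have hSmeas : MeasurableSet S := hA.inter (hU measurableSet_Iio)
  have hSA : S ⊆ A := fun x hx => hx.1
  have hSB : S ⊆ B := fun x hx => hAB hx.1
  have hSpos : 0 < volume S := hnear δ hδ
  have hSfin : volume S < ⊤ := lt_of_le_of_lt (measure_mono hSB) hBfin
  have hvolS : 0 < (volume S).toReal := ENNReal.toReal_pos hSpos.ne' hSfin.ne
  have hvolB : 0 ≤ (volume B).toReal := ENNReal.toReal_nonneg
  set D : Set (Fin d → ℝ) := B \ A with hDdef
  have hDmeas : MeasurableSet D := hB.diff hA
  -- notation for the integrand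
  set f : ℝ → (Fin d → ℝ) → ℝ := fun ε x => Real.exp (-(U x) / ε) with hfdef
  have hfmeas : ∀ ε : ℝ, Measurable (f ε) := fun ε =>
    Real.measurable_exp.comp ((hU.neg).div_const ε)
  have hfpos : ∀ ε x, 0 < f ε x := fun ε x => Real.exp_pos _
  -- integrability on B (hence on subsets)
  have hintB : ∀ ε : ℝ, 0 < ε → IntegrableOn (f ε) B volume := by
    intro ε hε
    haveI : Fact (volume B < ⊤) := ⟨hBfin⟩
    apply Integrable.mono' (integrable_const (Real.exp (-m / ε)))
      ((hfmeas ε).aestronglyMeasurable)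
    rw [ae_restrict_iff' hB]
    filter_upwards with x hx
    rw [Real.norm_eq_abs, abs_of_pos (hfpos ε x)]
    exact Real.exp_le_exp.2 (div_le_div_of_nonneg_right (neg_le_neg (hlow x hx)) hε.le)
  have hintA : ∀ ε : ℝ, 0 < ε → IntegrableOn (f ε) A volume :=
    fun ε hε => (hintB ε hε).mono_set hAB
  have hintS : ∀ ε : ℝ, 0 < ε → IntegrableOn (f ε) S volume :=
    fun ε hε => (hintB ε hε).mono_set hSB
  have hintD : ∀ ε : ℝ, 0 < ε → IntegrableOn (f ε) D volume :=
    fun ε hε => (hintB ε hε).mono_set Set.diff_subset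
  -- lower bound on the A-integral
  have hAlow : ∀ ε : ℝ, 0 < ε →
      Real.exp (-(m + δ) / ε) * (volume S).toReal ≤ ∫ x in A, f ε x := by
    intro ε hε
    have h1 : ∫ x in S, (Real.exp (-(m + δ) / ε) : ℝ) ≤ ∫ x in S, f ε x := by
      apply setIntegral_mono_on (integrableOn_const hSfin.ne) (hintS ε hε) hSmeas
      intro x hx
      exact Real.exp_le_exp.2 (div_le_div_of_nonneg_right (neg_le_neg hx.2.le) hε.le)
    have h2 : ∫ x in S, f ε x ≤ ∫ x in A, f ε x := by
      apply setIntegral_mono_set (hintA ε hε)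
      · filter_upwards with x using (hfpos ε x).le
      · exact Filter.Eventually.of_forall hSA
    calc Real.exp (-(m + δ) / ε) * (volume S).toReal
        = ∫ x in S, (Real.exp (-(m + δ) / ε) : ℝ) := by
          rw [setIntegral_const, smul_eq_mul, mul_comm]; rfl
      _ ≤ ∫ x in A, f ε x := h1.trans h2
  have hApos : ∀ ε : ℝ, 0 < ε → 0 < ∫ x in A, f ε x := by
    intro ε hε
    exact lt_of_lt_of_le (by positivity) (hAlow ε hε)
  -- upper bound on the (B \ A)-integral
  have hDup : ∀ ε : ℝ, 0 < ε →
      ∫ x in D, f ε x ≤ Real.exp (-(m + δ₀) / ε) * (volume B).toReal := by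
    intro ε hε
    have h1 : ∫ x in D, f ε x ≤ ∫ x in D, (Real.exp (-(m + δ₀) / ε) : ℝ) := by
      apply setIntegral_mono_on (hintD ε hε)
        (integrableOn_const (lt_of_le_of_lt (measure_mono Set.diff_subset) hBfin).ne)
        hDmeas
      intro x hx
      exact Real.exp_le_exp.2 (div_le_div_of_nonneg_right (neg_le_neg (hgap x hx)) hε.le)
    have h2 : (volume D).toReal ≤ (volume B).toReal :=
      ENNReal.toReal_mono hBfin.ne (measure_mono Set.diff_subset)
    calc ∫ x in D, f ε x ≤ (volume D).toReal * Real.exp (-(m + δ₀) / ε) := by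
          rw [setIntegral_const, smul_eq_mul] at h1; exact h1
      _ ≤ Real.exp (-(m + δ₀) / ε) * (volume B).toReal := by
          rw [mul_comm]
          exact mul_le_mul_of_nonneg_left h2 (Real.exp_pos _).le
  have hDnonneg : ∀ ε : ℝ, 0 ≤ ∫ x in D, f ε x := by
    intro ε
    exact setIntegral_nonneg hDmeas fun x _ => (hfpos ε x).le
  -- the ratio g := I_D / I_A tends to 0
  set C : ℝ := (volume B).toReal / (volume S).toReal with hCdef
  have hC : 0 ≤ C := by positivity
  set g : ℝ → ℝ := fun ε => (∫ x in D, f ε x) / (∫ x in A, f ε x) with hgdef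
  have hgbound : ∀ ε : ℝ, 0 < ε → g ε ≤ C * Real.exp (-δ / ε) := by
    intro ε hε
    have h2 : (∫ x in D, f ε x) / (∫ x in A, f ε x) ≤
        (Real.exp (-(m + δ₀) / ε) * (volume B).toReal) /
        (Real.exp (-(m + δ) / ε) * (volume S).toReal) :=
      div_le_div₀ (by positivity) (hDup ε hε) (by positivity) (hAlow ε hε)
    refine h2.trans (le_of_eq ?_)
    rw [div_eq_iff (by positivity : (Real.exp (-(m + δ) / ε) * (volume S).toReal) ≠ 0)]
    rw [hCdef]
    have hexp : Real.exp (-(m + δ₀) / ε) =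
        Real.exp (-δ / ε) * Real.exp (-(m + δ) / ε) := by
      rw [← Real.exp_add]
      congr 1
      rw [hδdef]
      field_simp
      ring
    rw [hexp]
    field_simp
  have hgto : Tendsto g (𝓝[>] 0) (𝓝 0) := by
    apply squeeze_zero' (f := g) (g := fun ε => C * Real.exp (-δ / ε))
    · filter_upwards [self_mem_nhdsWithin] with ε hε
      exact div_nonneg (hDnonneg ε) (hApos ε hε).le
    · filter_upwards [self_mem_nhdsWithin] with ε hε
      exact hgbound ε hε
    · have h1 : Tendsto (fun ε : ℝ => -δ / ε) (𝓝[>] 0) atBot := by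
        have h2 : Tendsto (fun ε : ℝ => δ / ε) (𝓝[>] 0) atTop := by
          have := tendsto_inv_nhdsGT_zero (𝕜 := ℝ)
          simpa [div_eq_mul_inv] using this.const_mul_atTop hδ
        simpa [neg_div] using tendsto_neg_atBot_iff.2 h2
      have := Real.tendsto_exp_atBot.comp h1
      simpa using (tendsto_const_nhds (x := C)).mul this
  -- final: ratio equals 1 / (1 + g ε) eventually
  have hmain : Tendsto (fun ε : ℝ => (1 + g ε)⁻¹) (𝓝[>] 0) (𝓝 1) := by
    have := (((tendsto_const_nhds (x := (1:ℝ))).add hgto).inv₀ (by norm_num))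
    simpa using this
  apply hmain.congr'
  filter_upwards [self_mem_nhdsWithin] with ε hε
  have hε : (0:ℝ) < ε := hε
  have hsplit : ∫ x in B, f ε x = (∫ x in A, f ε x) + ∫ x in D, f ε x := by
    have hdisj : Disjoint A D := Set.disjoint_sdiff_right.mono_left (le_refl _)
    have := setIntegral_union hdisj hDmeas (hintA ε hε) (hintD ε hε)
    rw [Set.union_diff_cancel hAB] at this
    exact this
  have hIA := hApos ε hε
  have hID := hDnonneg ε
  show ((1:ℝ) + (∫ x in D, f ε x) / (∫ x in A, f ε x))⁻¹
      = (∫ x in A, f ε x) / (∫ x in B, f ε x)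
  rw [hsplit]
  have h1 : (∫ x in A, f ε x) ≠ 0 := hIA.ne'
  have h2 : (∫ x in A, f ε x) + (∫ x in D, f ε x) ≠ 0 := ne_of_gt (by linarith)
  field_simp
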